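/- arXiv:2307.11008 — 2 statements merged into one kernel-verified Lean document; each statement's English description precedes it below -/
import Mathlib

section
/- Let ρ be a bipartite state on ℂ^d ⊗ ℂ^d, σ a PPT state, and λ ≥ 0 such that ρ_iso := pΦ_d + (1−p)τ_d ≤ λσ, where p ∈ [0,1]. Then dp ≤ λ. In particular, the generalised robustness of the isotropic state with respect to PPT states equals (dp−1)₊ for p > 1/d. -/
open Matrix BigOperators
open scoped Kronecker ComplexOrder

noncomputable section

abbrev BOp (d : ℕ) := Matrix (Fin d × Fin d) (Fin d × Fin d) ℂ

/-- Loewner order: `A ≤ B` iff `B - A` is positive semidefinite. -/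
def loe {n : Type*} [Fintype n] (A B : Matrix n n ℂ) : Prop := (B - A).PosSemidef

/-- A density operator: positive semidefinite with unit trace. -/
def IsState {n : Type*} [Fintype n] [DecidableEq n] (ρ : Matrix n n ℂ) : Prop :=
  ρ.PosSemidef ∧ ρ.trace = 1

/-- Separable bipartite state (convex combination of product states). -/
def IsSep {a b : Type*} [Fintype a] [DecidableEq a] [Fintype b] [DecidableEq b]
    (ρ : Matrix (a × b) (a × b) ℂ) : Prop :=
  ∃ (m : ℕ) (p : Fin m → ℝ) (A : Fin m → Matrix a a ℂ) (B : Fin m → Matrix b b ℂ),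
    (∀ i, 0 ≤ p i) ∧ (∑ i, p i) = 1 ∧
    (∀ i, IsState (A i)) ∧ (∀ i, IsState (B i)) ∧
    ρ = ∑ i, ((p i : ℝ) : ℂ) • (A i ⊗ₖ B i)

/-- The cone generated by separable states. -/
def InSepCone {a b : Type*} [Fintype a] [DecidableEq a] [Fintype b] [DecidableEq b]
    (S : Matrix (a × b) (a × b) ℂ) : Prop :=
  ∃ (c : ℝ) (σ : Matrix (a × b) (a × b) ℂ), 0 ≤ c ∧ IsSep σ ∧ S = ((c : ℝ) : ℂ) • σ

/-- Maximally entangled state `Φ_d` on `ℂ^d ⊗ ℂ^d`. -/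
def PhiME (d : ℕ) : BOp d := fun p q => if p.1 = p.2 ∧ q.1 = q.2 then ((1 : ℂ) / d) else 0

/-- `τ_d = (𝟙 - Φ_d)/(d² - 1)`. -/
def tauME (d : ℕ) : BOp d := (((d : ℂ)^2 - 1))⁻¹ • (1 - PhiME d)

/-- Partial transpose on the second tensor factor. -/
def pt {a b : Type*} (A : Matrix (a × b) (a × b) ℂ) : Matrix (a × b) (a × b) ℂ :=
  fun p q => A (p.1, q.2) (q.1, p.2)

/-- Total positive-semidefinite square root (junk value `0` off the PSD cone). -/
noncomputable def msqrt {n : Type*} [Fintype n] [DecidableEq n] (A : Matrix n n ℂ) :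
    Matrix n n ℂ :=
  open scoped Classical in
  if h : A.PosSemidef then
    (h.1.eigenvectorUnitary : Matrix n n ℂ) * diagonal ((↑) ∘ (√·) ∘ h.1.eigenvalues) *
      (star h.1.eigenvectorUnitary : Matrix n n ℂ) else 0

/-- Trace norm `‖A‖₁ = Tr √(AᴴA)`. -/
noncomputable def traceNorm {n : Type*} [Fintype n] [DecidableEq n] (A : Matrix n n ℂ) : ℝ :=
  (msqrt (Aᴴ * A)).trace.re


/-- A PPT state: a state whose partial transpose is positive semidefinite. -/
def IsPPTState {a b : Type*} [Fintype a] [DecidableEq a] [Fintype b] [DecidableEq b]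
    (σ : Matrix (a × b) (a × b) ℂ) : Prop :=
  σ.PosSemidef ∧ σ.trace = 1 ∧ (pt σ).PosSemidef

-- auxiliary
/-- Generalised robustness w.r.t. PPT states. -/
noncomputable def RgPPT {a b : Type*} [Fintype a] [DecidableEq a] [Fintype b] [DecidableEq b]
    (ρ : Matrix (a × b) (a × b) ℂ) : ℝ :=
  sInf {r : ℝ | 0 ≤ r ∧ ∃ σ, IsPPTState σ ∧ loe ρ (((1 + r : ℝ) : ℂ) • σ)}

set_option maxHeartbeats 1000000

variable {d : ℕ}

def Fmat (d : ℕ) : BOp d := fun p q => if p.1 = q.2 ∧ q.1 = p.2 then (1:ℂ) else 0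


lemma psd_trace_nonneg {n : Type*} [Fintype n] [DecidableEq n] {A : Matrix n n ℂ}
    (hA : A.PosSemidef) : 0 ≤ A.trace := by
  rw [Matrix.trace]
  apply Finset.sum_nonneg
  intro i _
  have := hA.2 (Finsupp.single i 1)
  simpa [dotProduct, Matrix.mulVec, Pi.single_apply, Finset.sum_ite_eq] using this

open scoped MatrixOrder in
lemma psd_trace_mul_nonneg {n : Type*} [Fintype n] [DecidableEq n] {A B : Matrix n n ℂ}
    (hA : A.PosSemidef) (hB : B.PosSemidef) : 0 ≤ (A * B).trace := by
  have hs : (CFC.sqrt A).PosSemidef := (CFC.sqrt_nonneg A).posSemidef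
  have h1 : A * B = CFC.sqrt A * (CFC.sqrt A * B) := by
    rw [← Matrix.mul_assoc, CFC.sqrt_mul_sqrt_self A hA.nonneg]
  rw [h1, Matrix.trace_mul_comm]
  have : (CFC.sqrt A * B * CFC.sqrt A).PosSemidef := by
    have := hB.mul_mul_conjTranspose_same (CFC.sqrt A)
    rwa [hs.1.eq] at this
  exact psd_trace_nonneg this

variable {d : ℕ}

lemma phi_mul_phi (hd : 0 < d) : PhiME d * PhiME d = PhiME d := by
  ext p q
  simp only [Matrix.mul_apply, PhiME, Fintype.sum_prod_type]
  by_cases h1 : p.1 = p.2 <;> by_cases h2 : q.1 = q.2 <;>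
    simp [h1, h2, Finset.sum_ite_eq, Finset.mul_sum, Finset.card_univ]
  rw [← mul_assoc, mul_inv_cancel₀ (by exact_mod_cast hd.ne' : (d:ℂ) ≠ 0), one_mul]

lemma phi_trace (hd : 0 < d) : (PhiME d).trace = 1 := by
  simp only [Matrix.trace, Matrix.diag, PhiME, Fintype.sum_prod_type]
  simp [Finset.sum_ite_eq, Finset.card_univ]
  exact mul_inv_cancel₀ (by exact_mod_cast hd.ne' : (d:ℂ) ≠ 0)

lemma phi_conjTranspose : (PhiME d)ᴴ = PhiME d := by
  ext p q
  simp only [Matrix.conjTranspose_apply, PhiME]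
  by_cases h1 : p.1 = p.2 <;> by_cases h2 : q.1 = q.2 <;> simp [h1, h2, and_comm]

lemma phi_psd (hd : 0 < d) : (PhiME d).PosSemidef := by
  have : PhiME d = (PhiME d)ᴴ * PhiME d := by rw [phi_conjTranspose, phi_mul_phi hd]
  rw [this]; exact Matrix.posSemidef_conjTranspose_mul_self _

lemma pt_phi : pt (PhiME d) = (d:ℂ)⁻¹ • Fmat d := by
  ext p q
  simp only [pt, PhiME, Fmat, Matrix.smul_apply, smul_eq_mul]
  by_cases h1 : p.1 = q.2 <;> by_cases h2 : q.1 = p.2 <;> simp [h1, h2, one_div]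

lemma F_mul_F : Fmat d * Fmat d = 1 := by
  ext p q
  simp only [Matrix.mul_apply, Fmat, Fintype.sum_prod_type, Matrix.one_apply, ite_mul, one_mul, zero_mul]
  rw [Finset.sum_comm]
  simp [ite_and, Finset.sum_ite_eq, Finset.sum_ite_eq', Prod.ext_iff, and_comm, eq_comm]

lemma F_conjTranspose : (Fmat d)ᴴ = Fmat d := by
  ext p q
  simp only [Matrix.conjTranspose_apply, Fmat]
  by_cases h1 : p.1 = q.2 <;> by_cases h2 : q.1 = p.2 <;> simp [h1, h2, and_comm]

lemma pt_add {a b : Type*} (A B : Matrix (a × b) (a × b) ℂ) : pt (A + B) = pt A + pt B := rfl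
lemma pt_smul {a b : Type*} (c : ℂ) (A : Matrix (a × b) (a × b) ℂ) : pt (c • A) = c • pt A := rfl
lemma pt_sub {a b : Type*} (A B : Matrix (a × b) (a × b) ℂ) : pt (A - B) = pt A - pt B := rfl
lemma pt_one {a b : Type*} [Fintype a] [DecidableEq a] [Fintype b] [DecidableEq b] :
    pt (1 : Matrix (a × b) (a × b) ℂ) = 1 := by
  ext p q
  simp only [pt, Matrix.one_apply, Prod.ext_iff]
  by_cases h1 : p.1 = q.1 <;> by_cases h2 : p.2 = q.2 <;> simp [h1, h2, eq_comm]
lemma pt_pt {a b : Type*} (A : Matrix (a × b) (a × b) ℂ) : pt (pt A) = A := rfl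
lemma pt_trace {a b : Type*} [Fintype a] [Fintype b] (A : Matrix (a × b) (a × b) ℂ) :
    (pt A).trace = A.trace := rfl

lemma pt_duality {a b : Type*} [Fintype a] [DecidableEq a] [Fintype b] [DecidableEq b]
    (A B : Matrix (a × b) (a × b) ℂ) : (A * pt B).trace = (pt A * B).trace := by
  simp only [Matrix.trace, Matrix.diag, Matrix.mul_apply, pt]
  rw [← Fintype.sum_prod_type', ← Fintype.sum_prod_type']
  exact Fintype.sum_equiv
    ⟨fun x => ((x.1.1, x.2.2), (x.2.1, x.1.2)), fun x => ((x.1.1, x.2.2), (x.2.1, x.1.2)),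
      fun x => rfl, fun x => rfl⟩ _ _ (fun x => rfl)

-- real nonneg smul preserves PSD
lemma psd_real_smul {n : Type*} [Fintype n] {A : Matrix n n ℂ} (hA : A.PosSemidef)
    {c : ℝ} (hc : 0 ≤ c) : ((c:ℂ) • A).PosSemidef := by
  constructor
  · unfold Matrix.IsHermitian
    rw [Matrix.conjTranspose_smul, hA.1.eq]
    congr 1
    simp
  · intro x
    exact (hA.smul (show (0:ℂ) ≤ c by exact_mod_cast hc)).2 x

lemma psd_of_proj {n : Type*} [Fintype n] {M : Matrix n n ℂ} (h1 : Mᴴ = M) (h2 : M * M = M) :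
    M.PosSemidef := by
  have : M = Mᴴ * M := by rw [h1, h2]
  rw [this]; exact Matrix.posSemidef_conjTranspose_mul_self _

lemma oneSubPhi_psd (hd : 0 < d) : ((1 : BOp d) - PhiME d).PosSemidef := by
  apply psd_of_proj
  · rw [Matrix.conjTranspose_sub, Matrix.conjTranspose_one, phi_conjTranspose]
  · simp only [Matrix.sub_mul, Matrix.mul_sub, Matrix.one_mul, Matrix.mul_one, phi_mul_phi hd]
    abel

lemma pplus_psd : ((2:ℂ)⁻¹ • ((1 : BOp d) + Fmat d)).PosSemidef := by
  apply psd_of_proj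
  · rw [Matrix.conjTranspose_smul, Matrix.conjTranspose_add, Matrix.conjTranspose_one,
      F_conjTranspose]
    norm_num
  · simp only [Matrix.smul_mul, Matrix.mul_smul, Matrix.add_mul, Matrix.mul_add,
      Matrix.one_mul, Matrix.mul_one, F_mul_F, smul_smul]
    match_scalars <;> ring

lemma pminus_psd : ((2:ℂ)⁻¹ • ((1 : BOp d) - Fmat d)).PosSemidef := by
  apply psd_of_proj
  · rw [Matrix.conjTranspose_smul, Matrix.conjTranspose_sub, Matrix.conjTranspose_one,
      F_conjTranspose]
    norm_num
  · simp only [Matrix.smul_mul, Matrix.mul_smul, Matrix.sub_mul, Matrix.mul_sub,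
      Matrix.one_mul, Matrix.mul_one, F_mul_F, smul_smul]
    match_scalars <;> ring


lemma cast_sq_sub (hd : 1 < d) : ((d : ℂ)^2 - 1) = (((d:ℝ)^2 - 1 : ℝ) : ℂ) := by push_cast; ring

lemma tau_psd (hd : 1 < d) : (tauME d).PosSemidef := by
  have h1 : tauME d = ((((d:ℝ)^2 - 1)⁻¹ : ℝ) : ℂ) • (1 - PhiME d) := by
    rw [tauME, cast_sq_sub hd, Complex.ofReal_inv]
  rw [h1]
  have hd' : (1:ℝ) < (d:ℝ) := by exact_mod_cast hd
  refine psd_real_smul (oneSubPhi_psd (by omega)) (inv_nonneg.mpr (by nlinarith))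

lemma one_trace : (1 : BOp d).trace = (d:ℂ)^2 := by
  simp [Matrix.trace_one]
  ring

lemma tau_trace (hd : 1 < d) : (tauME d).trace = 1 := by
  have hne : ((d:ℂ)^2 - 1) ≠ 0 := by
    rw [cast_sq_sub hd]
    simp only [ne_eq, Complex.ofReal_eq_zero]
    have : (1:ℝ) < (d:ℝ) := by exact_mod_cast hd
    nlinarith
  rw [tauME, Matrix.trace_smul, Matrix.trace_sub, one_trace, phi_trace (by omega)]
  field_simp
  rw [smul_eq_mul, one_div, inv_mul_cancel₀ hne]

lemma tau_mul_phi (hd : 0 < d) : tauME d * PhiME d = 0 := by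
  rw [tauME, Matrix.smul_mul, Matrix.sub_mul, Matrix.one_mul, phi_mul_phi hd, sub_self,
    smul_zero]


lemma key (d : ℕ) (hd : 1 < d) (p : ℝ) (hp0 : 0 ≤ p)
    (σ : BOp d) (hσ : IsPPTState σ) (lam : ℝ) (hlam : 0 ≤ lam)
    (h : loe (((p : ℝ) : ℂ) • PhiME d + ((1 - p : ℝ) : ℂ) • tauME d) ((lam : ℂ) • σ)) :
    (d : ℝ) * p ≤ lam := by
  have hd0 : 0 < d := by omega
  have hdC : ((d:ℂ)) ≠ 0 := by exact_mod_cast hd0.ne'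
  set ρ : BOp d := ((p : ℝ) : ℂ) • PhiME d + ((1 - p : ℝ) : ℂ) • tauME d with hρ
  set t : ℂ := (σ * PhiME d).trace with ht
  set u : ℂ := (pt σ * Fmat d).trace with hu
  -- Step A : p ≤ lam * t
  have hA : (p:ℂ) ≤ (lam:ℂ) * t := by
    have h0 : 0 ≤ (((lam:ℂ) • σ - ρ) * PhiME d).trace :=
      psd_trace_mul_nonneg h (phi_psd hd0)
    have hexp : (((lam:ℂ) • σ - ρ) * PhiME d).trace = (lam:ℂ) * t - (p:ℂ) := by
      rw [Matrix.sub_mul, Matrix.smul_mul, hρ, Matrix.add_mul, Matrix.smul_mul, Matrix.smul_mul,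
        tau_mul_phi hd0, smul_zero, add_zero, phi_mul_phi hd0, Matrix.trace_sub,
        Matrix.trace_smul, Matrix.trace_smul, phi_trace hd0]
      simp [smul_eq_mul]
      exact Or.inl rfl
    rw [hexp] at h0
    exact sub_nonneg.mp h0
  -- Step B : t = d⁻¹ * u
  have hB : t = (d:ℂ)⁻¹ * u := by
    rw [ht, show PhiME d = pt (pt (PhiME d)) from rfl, pt_duality, pt_phi, Matrix.mul_smul,
      Matrix.trace_smul, hu, smul_eq_mul]
  -- Step C : u ≤ 1
  have hC : u ≤ 1 := by
    have h0 : 0 ≤ (pt σ * ((2:ℂ)⁻¹ • ((1 : BOp d) - Fmat d))).trace :=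
      psd_trace_mul_nonneg hσ.2.2 (pminus_psd)
    have hexp : (pt σ * ((2:ℂ)⁻¹ • ((1 : BOp d) - Fmat d))).trace = (2:ℂ)⁻¹ * (1 - u) := by
      rw [Matrix.mul_smul, Matrix.trace_smul, Matrix.mul_sub, Matrix.mul_one, Matrix.trace_sub,
        pt_trace, hσ.2.1, hu, smul_eq_mul]
    rw [hexp] at h0
    have h2 : (0:ℂ) ≤ 1 - u := by
      have := mul_le_mul_of_nonneg_left h0 (by norm_num : (0:ℂ) ≤ 2)
      simpa using this
    exact sub_nonneg.mp h2
  -- combine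
  have hdinv : (0:ℂ) ≤ (d:ℂ)⁻¹ := by
    rw [show ((d:ℂ)) = (((d:ℝ)):ℂ) by push_cast; rfl, ← Complex.ofReal_inv]
    exact_mod_cast inv_nonneg.mpr (Nat.cast_nonneg d)
  have hnn : (0:ℂ) ≤ (lam:ℂ) * (d:ℂ)⁻¹ :=
    mul_nonneg (by exact_mod_cast hlam) hdinv
  have h5 : (lam:ℂ) * t ≤ (lam:ℂ) * (d:ℂ)⁻¹ := by
    rw [hB, ← mul_assoc]
    calc (lam:ℂ) * (d:ℂ)⁻¹ * u ≤ (lam:ℂ) * (d:ℂ)⁻¹ * 1 := mul_le_mul_of_nonneg_left hC hnn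
    _ = (lam:ℂ) * (d:ℂ)⁻¹ := mul_one _
  have h6 : (p:ℂ) ≤ (lam:ℂ) * (d:ℂ)⁻¹ := le_trans hA h5
  have h7 : (d:ℂ) * (p:ℂ) ≤ (lam:ℂ) := by
    have := mul_le_mul_of_nonneg_left h6 (by exact_mod_cast (Nat.cast_nonneg d) : (0:ℂ) ≤ (d:ℂ))
    calc (d:ℂ) * (p:ℂ) ≤ (d:ℂ) * ((lam:ℂ) * (d:ℂ)⁻¹) := this
    _ = (lam:ℂ) := by field_simp
  have h8 : (((d:ℝ) * p : ℝ):ℂ) ≤ ((lam:ℝ):ℂ) := by push_cast; exact h7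
  exact_mod_cast h8



theorem stmt1 (d : ℕ) (hd : 1 < d) (p : ℝ) (hp0 : 0 ≤ p) (hp1 : p ≤ 1)
    (σ : BOp d) (hσ : IsPPTState σ) (lam : ℝ) (hlam : 0 ≤ lam)
    (h : loe (((p : ℝ) : ℂ) • PhiME d + ((1 - p : ℝ) : ℂ) • tauME d) ((lam : ℂ) • σ)) :
    (d : ℝ) * p ≤ lam ∧
    (1 / (d : ℝ) < p →
      RgPPT (((p : ℝ) : ℂ) • PhiME d + ((1 - p : ℝ) : ℂ) • tauME d) = (d : ℝ) * p - 1) := by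
  have hd0 : 0 < d := by omega
  have hdR : (1:ℝ) < (d:ℝ) := by exact_mod_cast hd
  refine ⟨key d hd p hp0 σ hσ lam hlam h, fun hp => ?_⟩
  set ρ : BOp d := ((p : ℝ) : ℂ) • PhiME d + ((1 - p : ℝ) : ℂ) • tauME d with hρdef
  have hdp : 1 < (d:ℝ) * p := by
    rw [div_lt_iff₀ (by linarith)] at hp
    nlinarith
  have hp0' : 0 < p := by nlinarith
  have hdp0 : 0 < (d:ℝ) * p := by nlinarith
  have hr0 : 0 ≤ (d:ℝ) * p - 1 := by linarith
  -- ρ is PSD with trace 1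
  have hρpsd : ρ.PosSemidef :=
    (psd_real_smul (phi_psd hd0) hp0).add (psd_real_smul (tau_psd hd) (by linarith))
  have hρtr : ρ.trace = 1 := by
    rw [hρdef, Matrix.trace_add, Matrix.trace_smul, Matrix.trace_smul, phi_trace hd0,
      tau_trace hd]
    simp only [smul_eq_mul]
    push_cast; ring
  -- the optimal PPT state
  set σs : BOp d := ((((d:ℝ) * p)⁻¹ : ℝ) : ℂ) • (ρ + (((d:ℝ) * p - 1 : ℝ) : ℂ) • tauME d) with hσsdef
  have hσspsd : σs.PosSemidef :=
    psd_real_smul (hρpsd.add (psd_real_smul (tau_psd hd) hr0)) (inv_nonneg.mpr hdp0.le)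
  have hσstr : σs.trace = 1 := by
    rw [hσsdef, Matrix.trace_smul, Matrix.trace_add, Matrix.trace_smul, hρtr, tau_trace hd]
    push_cast
    field_simp
    rw [smul_eq_mul, smul_eq_mul, mul_one, show (1:ℂ) + ((d:ℂ) * (p:ℂ) - 1) = (d:ℂ) * (p:ℂ) by ring]
    exact one_div_mul_cancel (by exact_mod_cast hdp0.ne')
  have hptσs : (pt σs).PosSemidef := by
    have hid : pt σs = ((2 * ((d:ℝ) * ((d:ℝ) + 1))⁻¹ : ℝ) : ℂ) •
        ((2:ℂ)⁻¹ • ((1 : BOp d) + Fmat d)) := by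
      rw [hσsdef, hρdef]
      rw [show ((((d:ℝ) * p)⁻¹ : ℝ) : ℂ) • (((p : ℝ) : ℂ) • PhiME d + ((1 - p : ℝ) : ℂ) • tauME d
          + (((d:ℝ) * p - 1 : ℝ) : ℂ) • tauME d) =
        ((((d:ℝ) * p)⁻¹ : ℝ) : ℂ) • (((p : ℝ) : ℂ) • PhiME d + ((1 - p : ℝ) : ℂ) • tauME d)
          + ((((d:ℝ) * p)⁻¹ : ℝ) : ℂ) • ((((d:ℝ) * p - 1 : ℝ) : ℂ) • tauME d) from smul_add _ _ _]
      rw [tauME]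
      simp only [pt_add, pt_smul, pt_sub, pt_one, pt_phi]
      have hdC : ((d:ℂ)) ≠ 0 := by exact_mod_cast hd0.ne'
      have hpC : ((p:ℂ)) ≠ 0 := by exact_mod_cast hp0'.ne'
      have hsq : ((d:ℂ)^2 - 1) ≠ 0 := by
        rw [cast_sq_sub hd]
        simp only [ne_eq, Complex.ofReal_eq_zero]
        nlinarith
      have hd1 : ((d:ℂ) + 1) ≠ 0 := by
        intro hcon
        have : (((d:ℝ) + 1 : ℝ) : ℂ) = 0 := by push_cast; push_cast at hcon; linear_combination hcon
        simp only [Complex.ofReal_eq_zero] at this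
        nlinarith
      match_scalars <;> push_cast <;> field_simp <;> ring
    rw [hid]
    exact psd_real_smul pplus_psd (by positivity)
  have hσsPPT : IsPPTState σs := ⟨hσspsd, hσstr, hptσs⟩
  have hloe : loe ρ (((1 + ((d:ℝ) * p - 1) : ℝ) : ℂ) • σs) := by
    have hone : ((((d:ℝ) * p : ℝ)) : ℂ) * ((((d:ℝ) * p)⁻¹ : ℝ) : ℂ) = 1 := by
      rw [← Complex.ofReal_mul, mul_inv_cancel₀ hdp0.ne']
      simp
    have hid : (((1 + ((d:ℝ) * p - 1) : ℝ)) : ℂ) • σs = ρ + (((d:ℝ) * p - 1 : ℝ) : ℂ) • tauME d := by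
      rw [show ((1 + ((d:ℝ) * p - 1) : ℝ) : ℂ) = (((d:ℝ) * p : ℝ) : ℂ) by norm_num]
      rw [hσsdef, smul_smul, hone, one_smul]
    unfold loe
    rw [hid, add_sub_cancel_left]
    exact psd_real_smul (tau_psd hd) hr0
  -- compute the infimum
  have hmem : (d:ℝ) * p - 1 ∈
      {r : ℝ | 0 ≤ r ∧ ∃ σ', IsPPTState σ' ∧ loe ρ (((1 + r : ℝ) : ℂ) • σ')} :=
    ⟨hr0, σs, hσsPPT, hloe⟩
  have hlb : ∀ r ∈ {r : ℝ | 0 ≤ r ∧ ∃ σ', IsPPTState σ' ∧ loe ρ (((1 + r : ℝ) : ℂ) • σ')},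
      (d:ℝ) * p - 1 ≤ r := by
    rintro r ⟨hr, σ', hσ', hloe'⟩
    have := key d hd p hp0 σ' hσ' (1 + r) (by linarith) hloe'
    linarith
  rw [RgPPT]
  exact le_antisymm (csInf_le ⟨(d:ℝ) * p - 1, hlb⟩ hmem) (le_csInf ⟨_, hmem⟩ hlb)

end
end

section
/- For any two sub-normalised positive semidefinite operators ρ, σ (i.e. ρ, σ ≥ 0 and Tr ρ, Tr σ ≤ 1), the generalised trace distance T(ρ,σ) := (1/2)‖ρ−σ‖₁ + (1/2)|Tr ρ − Tr σ| and the purified distance P(ρ,σ) := √(1−F(ρ,σ)), where F(ρ,σ) = (‖√ρ√σ‖₁ + √((1−Tr ρ)(1−Tr σ)))², satisfy T(ρ,σ) ≤ P(ρ,σ) ≤ √(T(ρ,σ)(2−T(ρ,σ))). -/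
open Matrix BigOperators
open scoped Kronecker ComplexOrder

noncomputable section

/-- Generalised (Uhlmann) fidelity for sub-normalised positive operators. -/
noncomputable def gFid {n : Type*} [Fintype n] [DecidableEq n] (ρ σ : Matrix n n ℂ) : ℝ :=
  (traceNorm (msqrt ρ * msqrt σ) + Real.sqrt ((1 - ρ.trace.re) * (1 - σ.trace.re))) ^ 2

/-- Purified distance. -/
noncomputable def pDist {n : Type*} [Fintype n] [DecidableEq n] (ρ σ : Matrix n n ℂ) : ℝ :=
  Real.sqrt (1 - gFid ρ σ)

/-- Generalised trace distance. -/
noncomputable def gTDist {n : Type*} [Fintype n] [DecidableEq n] (ρ σ : Matrix n n ℂ) : ℝ :=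
  traceNorm (ρ - σ) / 2 + |ρ.trace.re - σ.trace.re| / 2

namespace FvdG
variable {n : Type*} [Fintype n] [DecidableEq n]

lemma mul_cancel_left {U W : Matrix n n ℂ} (h : U * W = 1) (A : Matrix n n ℂ) :
    U * (W * A) = A := by rw [← Matrix.mul_assoc, h, one_mul]

lemma diagonal_mul_diagonal_mul (d e : n → ℂ) (A : Matrix n n ℂ) :
    diagonal d * (diagonal e * A) = diagonal (fun i => d i * e i) * A := by
  rw [← Matrix.mul_assoc, diagonal_mul_diagonal]

/-- spectral function of a Hermitian matrix -/
noncomputable def sf {X : Matrix n n ℂ} (hX : X.IsHermitian) (f : ℝ → ℝ) : Matrix n n ℂ :=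
  (hX.eigenvectorUnitary : Matrix n n ℂ) * diagonal (fun i => (f (hX.eigenvalues i) : ℂ)) *
    (hX.eigenvectorUnitary : Matrix n n ℂ)ᴴ

variable {X : Matrix n n ℂ} (hX : X.IsHermitian)

lemma V_mul_Vh : (hX.eigenvectorUnitary : Matrix n n ℂ) * (hX.eigenvectorUnitary : Matrix n n ℂ)ᴴ = 1 := by
  rw [← star_eq_conjTranspose]
  exact (Matrix.mem_unitaryGroup_iff).mp hX.eigenvectorUnitary.2

lemma Vh_mul_V : (hX.eigenvectorUnitary : Matrix n n ℂ)ᴴ * (hX.eigenvectorUnitary : Matrix n n ℂ) = 1 := by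
  rw [← star_eq_conjTranspose]
  exact (Matrix.mem_unitaryGroup_iff').mp hX.eigenvectorUnitary.2

lemma cancelVhV (A : Matrix n n ℂ) :
    (hX.eigenvectorUnitary : Matrix n n ℂ)ᴴ * ((hX.eigenvectorUnitary : Matrix n n ℂ) * A) = A :=
  mul_cancel_left (Vh_mul_V hX) A

lemma cancelVVh (A : Matrix n n ℂ) :
    (hX.eigenvectorUnitary : Matrix n n ℂ) * ((hX.eigenvectorUnitary : Matrix n n ℂ)ᴴ * A) = A :=
  mul_cancel_left (V_mul_Vh hX) A

lemma sf_mul (f g : ℝ → ℝ) : sf hX f * sf hX g = sf hX (fun x => f x * g x) := by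
  unfold sf
  simp only [Matrix.mul_assoc, cancelVhV hX, diagonal_mul_diagonal_mul]
  norm_cast

lemma sf_congr {f g : ℝ → ℝ} (h : ∀ i, f (hX.eigenvalues i) = g (hX.eigenvalues i)) :
    sf hX f = sf hX g := by
  unfold sf
  have : (fun i => (f (hX.eigenvalues i) : ℂ)) = fun i => (g (hX.eigenvalues i) : ℂ) :=
    funext fun i => by rw [h i]
  rw [this]

lemma sf_id : sf hX (fun x => x) = X := by
  conv_rhs => rw [hX.spectral_theorem]
  rw [Unitary.conjStarAlgAut_apply, star_eq_conjTranspose]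
  rfl

lemma sf_one : sf hX (fun _ => 1) = 1 := by
  unfold sf
  simp [diagonal_one, V_mul_Vh hX]

lemma sf_sub (f g : ℝ → ℝ) : sf hX f - sf hX g = sf hX (fun x => f x - g x) := by
  unfold sf
  rw [← sub_mul, ← mul_sub, diagonal_sub]
  push_cast
  rfl

lemma star_ofReal_fun (f : n → ℝ) : (star fun i => ((f i : ℝ) : ℂ)) = fun i => ((f i : ℝ) : ℂ) :=
  funext fun i => by simp [Complex.conj_ofReal]

lemma sf_conjTranspose (f : ℝ → ℝ) : (sf hX f)ᴴ = sf hX f := by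
  unfold sf
  rw [conjTranspose_mul, conjTranspose_mul, conjTranspose_conjTranspose, diagonal_conjTranspose,
    star_ofReal_fun, Matrix.mul_assoc]

lemma sf_isHermitian (f : ℝ → ℝ) : (sf hX f).IsHermitian := sf_conjTranspose hX f

lemma sf_posSemidef {f : ℝ → ℝ} (h : ∀ i, 0 ≤ f (hX.eigenvalues i)) :
    (sf hX f).PosSemidef := by
  have key : sf hX f =
      (diagonal (fun i => ((Real.sqrt (f (hX.eigenvalues i)) : ℝ) : ℂ)) * (hX.eigenvectorUnitary : Matrix n n ℂ)ᴴ)ᴴ *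
      (diagonal (fun i => ((Real.sqrt (f (hX.eigenvalues i)) : ℝ) : ℂ)) * (hX.eigenvectorUnitary : Matrix n n ℂ)ᴴ) := by
    rw [conjTranspose_mul, conjTranspose_conjTranspose, diagonal_conjTranspose, star_ofReal_fun]
    unfold sf
    simp only [Matrix.mul_assoc, diagonal_mul_diagonal_mul]
    have : (fun i => ((Real.sqrt (f (hX.eigenvalues i)) : ℝ) : ℂ) * ((Real.sqrt (f (hX.eigenvalues i)) : ℝ) : ℂ)) =
        fun i => ((f (hX.eigenvalues i) : ℝ) : ℂ) := by
      funext i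
      rw [← Complex.ofReal_mul, Real.mul_self_sqrt (h i)]
    rw [this]
  rw [key]
  exact posSemidef_conjTranspose_mul_self _

lemma sf_trace (f : ℝ → ℝ) : (sf hX f).trace = ((∑ i, f (hX.eigenvalues i) : ℝ) : ℂ) := by
  unfold sf
  rw [trace_mul_comm, cancelVhV hX, trace_diagonal]
  push_cast
  rfl

end FvdG

namespace FvdG
variable {n : Type*} [Fintype n] [DecidableEq n]
variable {X : Matrix n n ℂ} (hX : X.IsHermitian)

lemma sf_zero : sf hX (fun _ => (0:ℝ)) = 0 := by
  unfold sf
  simp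

lemma psd_diag_nonneg {A : Matrix n n ℂ} (hA : A.PosSemidef) (i : n) : 0 ≤ A i i := by
  exact hA.diag_nonneg

lemma psd_diag_re_nonneg {A : Matrix n n ℂ} (hA : A.PosSemidef) (i : n) : 0 ≤ (A i i).re :=
  (Complex.nonneg_iff.mp (psd_diag_nonneg hA i)).1

lemma psd_diag_im_zero {A : Matrix n n ℂ} (hA : A.PosSemidef) (i : n) : (A i i).im = 0 :=
  ((Complex.nonneg_iff.mp (psd_diag_nonneg hA i)).2).symm

/-- `msqrt` of a PSD matrix is the spectral square root. -/
lemma msqrt_eq {A : Matrix n n ℂ} (hA : A.PosSemidef) : msqrt A = sf hA.1 Real.sqrt := by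
  have hpsd : (sf hA.1 Real.sqrt).PosSemidef :=
    sf_posSemidef hA.1 (fun i => Real.sqrt_nonneg _)
  have hsq : (sf hA.1 Real.sqrt) ^ 2 = A := by
    rw [pow_two]
    calc sf hA.1 Real.sqrt * sf hA.1 Real.sqrt
        = sf hA.1 (fun x => Real.sqrt x * Real.sqrt x) := sf_mul hA.1 _ _
      _ = sf hA.1 (fun x => x) :=
          sf_congr hA.1 (fun i => Real.mul_self_sqrt (hA.eigenvalues_nonneg i))
      _ = A := sf_id hA.1
  rw [msqrt, dif_pos hA, star_eq_conjTranspose]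
  rfl

lemma msqrt_psd {A : Matrix n n ℂ} (hA : A.PosSemidef) : (msqrt A).PosSemidef := by
  rw [msqrt_eq hA]; exact sf_posSemidef hA.1 (fun i => Real.sqrt_nonneg _)

lemma msqrt_mul_self {A : Matrix n n ℂ} (hA : A.PosSemidef) : msqrt A * msqrt A = A := by
  rw [msqrt_eq hA, sf_mul]
  exact (sf_congr hA.1 (fun i => Real.mul_self_sqrt (hA.eigenvalues_nonneg i))).trans (sf_id hA.1)

lemma psd_eq_of_mul_self {A B : Matrix n n ℂ} (hA : A.PosSemidef) (hB : B.PosSemidef)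
    (h : A * A = B * B) : A = B := by
  open scoped MatrixOrder in
  exact (CFC.mul_self_eq_mul_self_iff A B hA.nonneg hB.nonneg).mp h

lemma traceNorm_eq_sum_sqrt (M : Matrix n n ℂ) :
    traceNorm M = ∑ i, Real.sqrt ((posSemidef_conjTranspose_mul_self M).1.eigenvalues i) := by
  rw [traceNorm, msqrt_eq (posSemidef_conjTranspose_mul_self M), sf_trace]
  rw [Complex.ofReal_re]

lemma trace_mul_diagonal' (G : Matrix n n ℂ) (d : n → ℂ) :
    (G * diagonal d).trace = ∑ i, d i * G i i := by
  simp [Matrix.trace, Matrix.diag, Matrix.mul_diagonal, mul_comm]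

/-- trace of `sf hX f * Y` in terms of diagonal entries of the conjugated `Y`. -/
lemma trace_sf_mul (f : ℝ → ℝ) (Y : Matrix n n ℂ) :
    (sf hX f * Y).trace = ∑ i, (f (hX.eigenvalues i) : ℂ) *
      (((hX.eigenvectorUnitary : Matrix n n ℂ)ᴴ * Y * (hX.eigenvectorUnitary : Matrix n n ℂ)) i i) := by
  unfold sf
  have : (hX.eigenvectorUnitary : Matrix n n ℂ) * diagonal (fun i => (f (hX.eigenvalues i) : ℂ)) *
      (hX.eigenvectorUnitary : Matrix n n ℂ)ᴴ * Y =
      (hX.eigenvectorUnitary : Matrix n n ℂ) * diagonal (fun i => (f (hX.eigenvalues i) : ℂ)) *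
      ((hX.eigenvectorUnitary : Matrix n n ℂ)ᴴ * Y) := by rw [Matrix.mul_assoc]
  rw [this, trace_mul_cycle]
  rw [trace_mul_diagonal']

/-- contraction composition -/
lemma contraction_mul {U W : Matrix n n ℂ} (hU : (1 - Uᴴ * U).PosSemidef)
    (hW : (1 - Wᴴ * W).PosSemidef) : (1 - (U * W)ᴴ * (U * W)).PosSemidef := by
  have key : 1 - (U * W)ᴴ * (U * W) = (1 - Wᴴ * W) + Wᴴ * (1 - Uᴴ * U) * W := by
    rw [conjTranspose_mul]
    rw [Matrix.mul_sub, Matrix.sub_mul, Matrix.mul_one]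
    noncomm_ring
  rw [key]
  exact hW.add (hU.conjTranspose_mul_mul_same W)

lemma contraction_one : (1 - (1 : Matrix n n ℂ)ᴴ * 1).PosSemidef := by
  simp [Matrix.PosSemidef.zero]

lemma contraction_unitary {V : Matrix n n ℂ} (h : Vᴴ * V = 1) : (1 - Vᴴ * V).PosSemidef := by
  rw [h, sub_self]; exact Matrix.PosSemidef.zero

lemma diag_abs_le_one {U : Matrix n n ℂ} (h : (1 - Uᴴ * U).PosSemidef) (i : n) :
    ‖U i i‖ ≤ 1 := by
  have h1 : ((Uᴴ * U) i i).re ≤ 1 := by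
    have := psd_diag_re_nonneg h i
    have e : ((1 : Matrix n n ℂ) - Uᴴ * U) i i = 1 - (Uᴴ * U) i i := by
      simp [Matrix.sub_apply, Matrix.one_apply]
    rw [e] at this
    simp only [Complex.sub_re, Complex.one_re] at this
    linarith
  have h2 : ‖U i i‖ ^ 2 ≤ ((Uᴴ * U) i i).re := by
    have e : ((Uᴴ * U) i i).re = ∑ j, Complex.normSq (U j i) := by
      simp only [Matrix.mul_apply, Matrix.conjTranspose_apply, Complex.re_sum]
      refine Finset.sum_congr rfl fun j _ => ?_
      simp only [RCLike.star_def, Complex.normSq_apply, Complex.mul_re, Complex.conj_re,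
        Complex.conj_im]
      ring
    rw [e, Complex.sq_norm]
    exact Finset.single_le_sum (f := fun j => Complex.normSq (U j i))
      (fun j _ => Complex.normSq_nonneg _) (Finset.mem_univ i)
  nlinarith [norm_nonneg (U i i)]

end FvdG

namespace FvdG
variable {n : Type*} [Fintype n] [DecidableEq n]

theorem traceNorm_dual (M : Matrix n n ℂ) :
    ∃ U : Matrix n n ℂ, (1 - Uᴴ * U).PosSemidef ∧ (1 - U * Uᴴ).PosSemidef ∧
      (M * U).trace.re = traceNorm M ∧
      ∀ U' : Matrix n n ℂ, (1 - U'ᴴ * U').PosSemidef → (M * U').trace.re ≤ traceNorm M := by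
  have h : (Mᴴ * M).PosSemidef := posSemidef_conjTranspose_mul_self M
  set hh := h.1 with hhdef
  have hμ : ∀ i, 0 ≤ hh.eigenvalues i := h.eigenvalues_nonneg
  set S : Matrix n n ℂ := sf hh Real.sqrt with hSdef
  set N : Matrix n n ℂ := sf hh (fun x => (Real.sqrt x)⁻¹) with hNdef
  set Pp : Matrix n n ℂ := sf hh (fun x => if x = 0 then (0:ℝ) else 1) with hPdef
  have hNS : N * S = Pp := by
    rw [hNdef, hSdef, sf_mul]
    exact sf_congr hh (fun i => by
      rcases eq_or_lt_of_le (hμ i) with h0 | h0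
      · simp [← h0]
      · simp [ne_of_gt h0, inv_mul_cancel₀ (ne_of_gt (Real.sqrt_pos.mpr h0))])
  have hPS : Pp * S = S := by
    rw [hPdef, hSdef, sf_mul]
    exact sf_congr hh (fun i => by
      rcases eq_or_lt_of_le (hμ i) with h0 | h0
      · simp [← h0]
      · simp [ne_of_gt h0])
  have hNP : N * Pp = N := by
    rw [hNdef, hPdef, sf_mul]
    exact sf_congr hh (fun i => by
      rcases eq_or_lt_of_le (hμ i) with h0 | h0
      · simp [← h0]
      · simp [ne_of_gt h0])
  have hNHN : N * ((Mᴴ * M) * N) = Pp := by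
    conv_lhs => rw [← sf_id hh]
    rw [hNdef, hPdef, sf_mul, sf_mul]
    exact sf_congr hh (fun i => by
      rcases eq_or_lt_of_le (hμ i) with h0 | h0
      · simp [← h0]
      · have hs : Real.sqrt (hh.eigenvalues i) ≠ 0 := ne_of_gt (Real.sqrt_pos.mpr h0)
        have hx : Real.sqrt (hh.eigenvalues i) * Real.sqrt (hh.eigenvalues i) = hh.eigenvalues i :=
          Real.mul_self_sqrt (le_of_lt h0)
        simp only [if_neg (ne_of_gt h0)]
        field_simp
        rw [sq, hx])
  have h1P : (1 : Matrix n n ℂ) - Pp = sf hh (fun x => 1 - (if x = 0 then (0:ℝ) else 1)) := by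
    rw [hPdef, ← sf_sub, sf_one]
  have h1Ppsd : ((1 : Matrix n n ℂ) - Pp).PosSemidef := by
    rw [h1P]
    exact sf_posSemidef hh (fun i => by by_cases h0 : hh.eigenvalues i = 0 <;> simp [h0])
  have hPpsd : Pp.PosSemidef :=
    sf_posSemidef hh (fun i => by by_cases h0 : hh.eigenvalues i = 0 <;> simp [h0])
  have hPherm : Ppᴴ = Pp := sf_conjTranspose hh _
  have hNherm : Nᴴ = N := sf_conjTranspose hh _
  have hMP : M * Pp = M := by
    have hzero : (M * (1 - Pp))ᴴ * (M * (1 - Pp)) = 0 := by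
      have h1Ph : (1 - Pp)ᴴ = 1 - Pp := by
        rw [h1P]; exact sf_conjTranspose hh _
      rw [conjTranspose_mul, h1Ph]
      have : (1 - Pp) * Mᴴ * (M * (1 - Pp)) = (1 - Pp) * ((Mᴴ * M) * (1 - Pp)) := by
        simp only [Matrix.mul_assoc]
      rw [this]
      conv_lhs => rw [← sf_id hh, h1P]
      rw [sf_mul, sf_mul]
      rw [sf_congr hh (f := fun x => (1 - if x = 0 then (0:ℝ) else 1) * (x * (1 - if x = 0 then (0:ℝ) else 1))) (g := fun _ => 0) (fun i => by
        rcases eq_or_lt_of_le (hμ i) with h0 | h0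
        · simp [← h0]
        · simp [ne_of_gt h0])]
      exact sf_zero hh
    have := conjTranspose_mul_self_eq_zero.mp hzero
    rw [Matrix.mul_sub, Matrix.mul_one, sub_eq_zero] at this
    exact this.symm
  set W : Matrix n n ℂ := M * N with hWdef
  have hWh : Wᴴ = N * Mᴴ := by rw [hWdef, conjTranspose_mul, hNherm]
  have hWS : W * S = M := by
    rw [hWdef, Matrix.mul_assoc, hNS, hMP]
  have hWW : Wᴴ * W = Pp := by
    rw [hWh, hWdef]
    calc N * Mᴴ * (M * N) = N * ((Mᴴ * M) * N) := by simp only [Matrix.mul_assoc]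
      _ = Pp := hNHN
  have hWP : W * Pp = W := by rw [hWdef, Matrix.mul_assoc, hNP]
  set Q : Matrix n n ℂ := W * Wᴴ with hQdef
  have hQh : Qᴴ = Q := by rw [hQdef, conjTranspose_mul, conjTranspose_conjTranspose]
  have hQ2 : Q * Q = Q := by
    rw [hQdef]
    calc W * Wᴴ * (W * Wᴴ) = W * (Wᴴ * W) * Wᴴ := by simp only [Matrix.mul_assoc]
      _ = W * Pp * Wᴴ := by rw [hWW]
      _ = W * Wᴴ := by rw [hWP]
  have h1Qpsd : ((1 : Matrix n n ℂ) - Q).PosSemidef := by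
    have key : (1 - Q)ᴴ * (1 - Q) = 1 - Q := by
      rw [conjTranspose_sub, conjTranspose_one, hQh]
      rw [Matrix.mul_sub, Matrix.mul_one, Matrix.sub_mul, Matrix.one_mul, hQ2]
      abel
    rw [← key]
    exact posSemidef_conjTranspose_mul_self _
  have htn : traceNorm M = ∑ i, Real.sqrt (hh.eigenvalues i) := traceNorm_eq_sum_sqrt M
  have hWcon : ((1 : Matrix n n ℂ) - Wᴴ * W).PosSemidef := by rw [hWW]; exact h1Ppsd
  refine ⟨Wᴴ, ?_, ?_, ?_, ?_⟩
  · rw [conjTranspose_conjTranspose, ← hQdef]; exact h1Qpsd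
  · rw [conjTranspose_conjTranspose, hWW]; exact h1Ppsd
  · have : (M * Wᴴ).trace = S.trace := by
      calc (M * Wᴴ).trace = (Wᴴ * M).trace := trace_mul_comm _ _
        _ = (Wᴴ * (W * S)).trace := by rw [hWS]
        _ = ((Wᴴ * W) * S).trace := by simp only [Matrix.mul_assoc]
        _ = (Pp * S).trace := by rw [hWW]
        _ = S.trace := by rw [hPS]
    rw [this, hSdef, sf_trace, Complex.ofReal_re, htn]
  · intro U' hU'
    have hre : (M * U').trace = (sf hh Real.sqrt * (U' * W)).trace := by
      calc (M * U').trace = ((W * S) * U').trace := by rw [hWS]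
        _ = (U' * (W * S)).trace := trace_mul_comm _ _
        _ = ((U' * W) * S).trace := by simp only [Matrix.mul_assoc]
        _ = (S * (U' * W)).trace := trace_mul_comm _ _
        _ = (sf hh Real.sqrt * (U' * W)).trace := by rw [hSdef]
    have hGcon : ((1 : Matrix n n ℂ) -
        ((hh.eigenvectorUnitary : Matrix n n ℂ)ᴴ * (U' * W) * (hh.eigenvectorUnitary : Matrix n n ℂ))ᴴ *
        ((hh.eigenvectorUnitary : Matrix n n ℂ)ᴴ * (U' * W) * (hh.eigenvectorUnitary : Matrix n n ℂ))).PosSemidef := by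
      apply contraction_mul
      · apply contraction_mul
        · apply contraction_unitary
          rw [conjTranspose_conjTranspose]
          exact V_mul_Vh hh
        · exact contraction_mul hU' hWcon
      · exact contraction_unitary (Vh_mul_V hh)
    rw [hre, trace_sf_mul hh Real.sqrt (U' * W), htn, Complex.re_sum]
    apply Finset.sum_le_sum
    intro i _
    rw [Complex.re_ofReal_mul]
    have habs := diag_abs_le_one hGcon i
    have hrele : (((hh.eigenvectorUnitary : Matrix n n ℂ)ᴴ * (U' * W) *
        (hh.eigenvectorUnitary : Matrix n n ℂ)) i i).re ≤ 1 :=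
      le_trans (Complex.re_le_norm _) habs
    nlinarith [Real.sqrt_nonneg (hh.eigenvalues i)]

end FvdG

namespace FvdG
variable {n : Type*} [Fintype n] [DecidableEq n]

lemma traceNorm_nonneg' (M : Matrix n n ℂ) : 0 ≤ traceNorm M := by
  rw [traceNorm_eq_sum_sqrt]
  exact Finset.sum_nonneg fun i _ => Real.sqrt_nonneg _

lemma contraction_neg_one : (1 - (-1 : Matrix n n ℂ)ᴴ * (-1)).PosSemidef := by
  simp only [conjTranspose_neg, conjTranspose_one, neg_mul_neg, one_mul, sub_self]
  exact Matrix.PosSemidef.zero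

lemma re_trace_le_traceNorm (M : Matrix n n ℂ) : M.trace.re ≤ traceNorm M := by
  obtain ⟨U, _, _, _, hub⟩ := traceNorm_dual M
  have := hub 1 contraction_one
  simpa using this

lemma abs_re_trace_le_traceNorm (M : Matrix n n ℂ) : |M.trace.re| ≤ traceNorm M := by
  obtain ⟨U, _, _, _, hub⟩ := traceNorm_dual M
  have h1 := hub 1 contraction_one
  have h2 := hub (-1) contraction_neg_one
  rw [Matrix.mul_one] at h1
  rw [Matrix.mul_neg, Matrix.mul_one, trace_neg, Complex.neg_re] at h2
  rw [abs_le]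
  constructor <;> linarith

lemma traceNorm_triangle (A B : Matrix n n ℂ) :
    traceNorm (A + B) ≤ traceNorm A + traceNorm B := by
  obtain ⟨U, hU, _, heq, _⟩ := traceNorm_dual (A + B)
  obtain ⟨_, _, _, _, hubA⟩ := traceNorm_dual A
  obtain ⟨_, _, _, _, hubB⟩ := traceNorm_dual B
  have hsplit : ((A + B) * U).trace.re = (A * U).trace.re + (B * U).trace.re := by
    rw [Matrix.add_mul, trace_add, Complex.add_re]
  linarith [hubA U hU, hubB U hU]

lemma traceNorm_psd_eq {A : Matrix n n ℂ} (hA : A.PosSemidef) : traceNorm A = A.trace.re := by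
  have hAA : (A * A).PosSemidef := by
    have := posSemidef_conjTranspose_mul_self A
    rwa [hA.1] at this
  have hs : msqrt (A * A) = A := by
    exact psd_eq_of_mul_self (msqrt_psd hAA) hA (msqrt_mul_self hAA)
  rw [traceNorm, hA.1, hs]

lemma traceNorm_neg (A : Matrix n n ℂ) : traceNorm (-A) = traceNorm A := by
  unfold traceNorm
  simp only [conjTranspose_neg, neg_mul_neg]

/-- spectral projection onto the nonnegative part of a Hermitian matrix -/
theorem herm_proj {X : Matrix n n ℂ} (hX : X.IsHermitian) :
    ∃ E : Matrix n n ℂ, E.PosSemidef ∧ (1 - E).PosSemidef ∧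
      (X * E).trace.re = (traceNorm X + X.trace.re) / 2 := by
  refine ⟨sf hX (fun x => if 0 ≤ x then 1 else 0),
    sf_posSemidef hX (fun i => by by_cases h0 : 0 ≤ hX.eigenvalues i <;> simp [h0]), ?_, ?_⟩
  · rw [show (1:Matrix n n ℂ) - sf hX (fun x => if 0 ≤ x then 1 else 0)
        = sf hX (fun x => 1 - if 0 ≤ x then 1 else 0) from by rw [← sf_one hX, sf_sub]]
    exact sf_posSemidef hX (fun i => by by_cases h0 : 0 ≤ hX.eigenvalues i <;> simp [h0])
  · have htr : X.trace.re = ∑ i, hX.eigenvalues i := by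
      conv_lhs => rw [← sf_id hX]
      rw [sf_trace, Complex.ofReal_re]
    have htn : traceNorm X = ∑ i, |hX.eigenvalues i| := by
      have hXX : Xᴴ * X = sf hX (fun x => x * x) := by
        rw [show Xᴴ = X from hX]
        have := sf_mul hX (fun x => x) (fun x => x)
        rwa [sf_id hX] at this
      have habs : (sf hX (fun x => |x|)).PosSemidef :=
        sf_posSemidef hX (fun i => abs_nonneg _)
      have hsq : (sf hX (fun x => |x|)) ^ 2 = Xᴴ * X := by
        rw [pow_two, sf_mul, hXX]
        exact sf_congr hX (fun i => abs_mul_abs_self _)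
      have := psd_eq_of_mul_self habs (msqrt_psd (posSemidef_conjTranspose_mul_self X))
        (by rw [← pow_two, hsq, msqrt_mul_self (posSemidef_conjTranspose_mul_self X)])
      rw [traceNorm, ← this,
        sf_trace, Complex.ofReal_re]
    have hXf : X * sf hX (fun x => if 0 ≤ x then 1 else 0)
        = sf hX (fun x => x * (if 0 ≤ x then 1 else 0)) := by
      have := sf_mul hX (fun x => x) (fun x => if 0 ≤ x then 1 else 0)
      rwa [sf_id hX] at this
    have hXE : (X * sf hX (fun x => if 0 ≤ x then 1 else 0)).trace.re
        = ∑ i, (if 0 ≤ hX.eigenvalues i then hX.eigenvalues i else 0) := by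
      rw [hXf, sf_trace, Complex.ofReal_re]
      refine Finset.sum_congr rfl fun i _ => ?_
      by_cases h0 : 0 ≤ hX.eigenvalues i <;> simp [h0]
    rw [hXE, htr, htn]
    rw [← Finset.sum_add_distrib, Finset.sum_div]
    refine Finset.sum_congr rfl fun i _ => ?_
    by_cases h0 : 0 ≤ hX.eigenvalues i
    · rw [if_pos h0, abs_of_nonneg h0]; ring
    · rw [if_neg h0, abs_of_neg (lt_of_not_ge h0)]; ring

/-- Powers–Størmer inequality -/
theorem powers_stormer {A B : Matrix n n ℂ} (hA : A.PosSemidef) (hB : B.PosSemidef) :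
    ((A - B) * (A - B)).trace.re ≤ traceNorm (A * A - B * B) := by
  have hC : (A - B).IsHermitian := hA.1.sub hB.1
  set sgn : ℝ → ℝ := fun x => if 0 ≤ x then 1 else -1 with hsgn
  set U : Matrix n n ℂ := sf hC sgn with hU
  have hUcon : ((1:Matrix n n ℂ) - Uᴴ * U).PosSemidef := by
    have : Uᴴ * U = 1 := by
      rw [hU, sf_conjTranspose, sf_mul, show (fun x => sgn x * sgn x) = fun _ => (1:ℝ) from
        funext fun x => by by_cases h0 : 0 ≤ x <;> simp [hsgn, h0], sf_one]
    rw [this, sub_self]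
    exact Matrix.PosSemidef.zero
  obtain ⟨_, _, _, _, hub⟩ := traceNorm_dual (A * A - B * B)
  refine le_trans ?_ (hub U hUcon)
  -- key : ((A*A - B*B) * U).trace = ((A+B) * sf hC |·|).trace
  have hCU : (A - B) * U = sf hC (fun x => |x|) := by
    have h1 := sf_mul hC (fun x => x) sgn
    rw [sf_id hC] at h1
    rw [hU, h1]
    exact sf_congr hC (fun i => by
      by_cases h0 : 0 ≤ hC.eigenvalues i
      · simp [hsgn, h0, abs_of_nonneg h0]
      · simp [hsgn, h0, abs_of_neg (lt_of_not_ge h0)])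
  have hUC : U * (A - B) = sf hC (fun x => |x|) := by
    have h1 := sf_mul hC sgn (fun x => x)
    rw [sf_id hC] at h1
    rw [hU, h1]
    exact sf_congr hC (fun i => by
      by_cases h0 : 0 ≤ hC.eigenvalues i
      · simp [hsgn, h0, abs_of_nonneg h0]
      · simp [hsgn, h0, abs_of_neg (lt_of_not_ge h0)])
  have halg : (A * A - B * B) * U + (A * A - B * B) * U
      = (A - B) * ((A + B) * U) + (A + B) * ((A - B) * U) := by
    noncomm_ring
  have htr2 : (2:ℝ) * ((A * A - B * B) * U).trace.re
      = ((A - B) * ((A + B) * U)).trace.re + ((A + B) * ((A - B) * U)).trace.re := by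
    have := congrArg (fun (Z : Matrix n n ℂ) => Z.trace.re) halg
    simp only [trace_add, Complex.add_re] at this
    linarith
  have hterm1 : ((A - B) * ((A + B) * U)).trace = ((A + B) * sf hC (fun x => |x|)).trace := by
    calc ((A - B) * ((A + B) * U)).trace = (((A - B) * (A + B)) * U).trace := by
          simp only [Matrix.mul_assoc]
      _ = (U * ((A - B) * (A + B))).trace := trace_mul_comm _ _
      _ = ((U * (A - B)) * (A + B)).trace := by simp only [Matrix.mul_assoc]
      _ = ((A + B) * (U * (A - B))).trace := trace_mul_comm _ _
      _ = ((A + B) * sf hC (fun x => |x|)).trace := by rw [hUC]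
  have hterm2 : ((A + B) * ((A - B) * U)).trace = ((A + B) * sf hC (fun x => |x|)).trace := by
    rw [hCU]
  -- now compute the diagonal sum
  have hmain : ((A - B) * (A - B)).trace.re ≤ ((A + B) * sf hC (fun x => |x|)).trace.re := by
    have hlhs : ((A - B) * (A - B)).trace.re = ∑ i, hC.eigenvalues i ^ 2 := by
      have h1 := sf_mul hC (fun x => x) (fun x => x)
      rw [sf_id hC] at h1
      rw [h1, sf_trace, Complex.ofReal_re]
      exact Finset.sum_congr rfl fun i _ => (sq (hC.eigenvalues i)).symm
    have hrhs : ((A + B) * sf hC (fun x => |x|)).trace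
        = ∑ i, ((|hC.eigenvalues i| : ℝ) : ℂ) *
          (((hC.eigenvectorUnitary : Matrix n n ℂ)ᴴ * (A + B) * (hC.eigenvectorUnitary : Matrix n n ℂ)) i i) := by
      rw [trace_mul_comm, trace_sf_mul]
    have hdiagC : ∀ i, (((hC.eigenvectorUnitary : Matrix n n ℂ)ᴴ * A * (hC.eigenvectorUnitary : Matrix n n ℂ)) i i).re
        - (((hC.eigenvectorUnitary : Matrix n n ℂ)ᴴ * B * (hC.eigenvectorUnitary : Matrix n n ℂ)) i i).re
        = hC.eigenvalues i := by
      intro i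
      have hd : (hC.eigenvectorUnitary : Matrix n n ℂ)ᴴ * (A - B) * (hC.eigenvectorUnitary : Matrix n n ℂ)
          = diagonal (RCLike.ofReal ∘ hC.eigenvalues) := by
        rw [← star_eq_conjTranspose]
        have hd' := hC.conjStarAlgAut_star_eigenvectorUnitary
        rw [Unitary.conjStarAlgAut_apply, Unitary.coe_star, star_star] at hd'
        exact hd'
      have hsplit : (hC.eigenvectorUnitary : Matrix n n ℂ)ᴴ * (A - B) * (hC.eigenvectorUnitary : Matrix n n ℂ)
          = (hC.eigenvectorUnitary : Matrix n n ℂ)ᴴ * A * (hC.eigenvectorUnitary : Matrix n n ℂ)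
          - (hC.eigenvectorUnitary : Matrix n n ℂ)ᴴ * B * (hC.eigenvectorUnitary : Matrix n n ℂ) := by
        rw [Matrix.mul_sub, Matrix.sub_mul]
      have := congrArg (fun (Z : Matrix n n ℂ) => (Z i i).re) (hsplit.symm.trans hd)
      simp only [Matrix.sub_apply, Complex.sub_re] at this
      rw [this]
      simp [diagonal_apply_eq, Function.comp]
  -- use the above
    rw [hlhs, hrhs, Complex.re_sum]
    apply Finset.sum_le_sum
    intro i _
    rw [Complex.re_ofReal_mul]
    have hsplit : ((hC.eigenvectorUnitary : Matrix n n ℂ)ᴴ * (A + B) * (hC.eigenvectorUnitary : Matrix n n ℂ)) i i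
        = ((hC.eigenvectorUnitary : Matrix n n ℂ)ᴴ * A * (hC.eigenvectorUnitary : Matrix n n ℂ)) i i
        + ((hC.eigenvectorUnitary : Matrix n n ℂ)ᴴ * B * (hC.eigenvectorUnitary : Matrix n n ℂ)) i i := by
      rw [show (hC.eigenvectorUnitary : Matrix n n ℂ)ᴴ * (A + B) * (hC.eigenvectorUnitary : Matrix n n ℂ)
          = (hC.eigenvectorUnitary : Matrix n n ℂ)ᴴ * A * (hC.eigenvectorUnitary : Matrix n n ℂ)
          + (hC.eigenvectorUnitary : Matrix n n ℂ)ᴴ * B * (hC.eigenvectorUnitary : Matrix n n ℂ) from by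
        rw [Matrix.mul_add, Matrix.add_mul]]
      simp [Matrix.add_apply]
    have ha := psd_diag_re_nonneg (hA.conjTranspose_mul_mul_same (hC.eigenvectorUnitary : Matrix n n ℂ)) i
    have hb := psd_diag_re_nonneg (hB.conjTranspose_mul_mul_same (hC.eigenvectorUnitary : Matrix n n ℂ)) i
    have hlam := hdiagC i
    rw [hsplit, Complex.add_re]
    have habs : |hC.eigenvalues i| ≤ (((hC.eigenvectorUnitary : Matrix n n ℂ)ᴴ * A * (hC.eigenvectorUnitary : Matrix n n ℂ)) i i).re
        + (((hC.eigenvectorUnitary : Matrix n n ℂ)ᴴ * B * (hC.eigenvectorUnitary : Matrix n n ℂ)) i i).re := by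
      rw [abs_le]; constructor <;> linarith
    nlinarith [abs_nonneg (hC.eigenvalues i), sq_abs (hC.eigenvalues i)]
  calc ((A - B) * (A - B)).trace.re ≤ ((A + B) * sf hC (fun x => |x|)).trace.re := hmain
    _ ≤ ((A * A - B * B) * U).trace.re := by
        have : ((A + B) * sf hC (fun x => |x|)).trace.re = ((A * A - B * B) * U).trace.re := by
          have e1 := congrArg Complex.re hterm1
          have e2 := congrArg Complex.re hterm2
          linarith [htr2]
        linarith

end FvdG

namespace FvdG
variable {n : Type*} [Fintype n] [DecidableEq n]

lemma psd_trace_re_nonneg {A : Matrix n n ℂ} (hA : A.PosSemidef) : 0 ≤ A.trace.re := by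
  rw [Matrix.trace, Complex.re_sum]
  exact Finset.sum_nonneg fun i _ => psd_diag_re_nonneg hA i

lemma trace_mul_psd_re_nonneg {A B : Matrix n n ℂ} (hA : A.PosSemidef) (hB : B.PosSemidef) :
    0 ≤ ((A * B).trace).re := by
  have hS := msqrt_psd hA
  have hSh : (msqrt A)ᴴ = msqrt A := hS.1
  have : (A * B).trace = ((msqrt A)ᴴ * B * msqrt A).trace := by
    calc (A * B).trace = ((msqrt A * msqrt A) * B).trace := by rw [msqrt_mul_self hA]
      _ = (msqrt A * (msqrt A * B)).trace := by simp only [Matrix.mul_assoc]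
      _ = ((msqrt A * B) * msqrt A).trace := trace_mul_comm _ _
      _ = ((msqrt A)ᴴ * B * msqrt A).trace := by rw [hSh]
  rw [this]
  exact psd_trace_re_nonneg (hB.conjTranspose_mul_mul_same _)

lemma trace_conj_contraction {Z U : Matrix n n ℂ} (hZ : Z.PosSemidef)
    (hU : ((1:Matrix n n ℂ) - U * Uᴴ).PosSemidef) :
    ((Uᴴ * Z * U).trace).re ≤ Z.trace.re := by
  have e : (Uᴴ * Z * U).trace = (Z * (U * Uᴴ)).trace := by
    calc (Uᴴ * Z * U).trace = (U * Uᴴ * Z).trace := trace_mul_cycle _ _ _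
      _ = (Z * (U * Uᴴ)).trace := trace_mul_comm _ _
  have h2 : 0 ≤ ((Z * (1 - U * Uᴴ)).trace).re := trace_mul_psd_re_nonneg hZ hU
  have h3 : (Z * (1 - U * Uᴴ)).trace = Z.trace - (Z * (U * Uᴴ)).trace := by
    rw [Matrix.mul_sub, Matrix.mul_one, trace_sub]
  rw [e]
  rw [h3] at h2
  simp only [Complex.sub_re] at h2
  linarith

lemma trace_conjTranspose_mul_re (X : Matrix n n ℂ) :
    (Xᴴ * X).trace.re = ∑ p : n × n, ‖X p.1 p.2‖ ^ 2 := by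
  have e : ∀ i, ((Xᴴ * X) i i).re = ∑ j, ‖X j i‖ ^ 2 := by
    intro i
    simp only [Matrix.mul_apply, Matrix.conjTranspose_apply, Complex.re_sum]
    refine Finset.sum_congr rfl fun j _ => ?_
    simp only [RCLike.star_def, Complex.mul_re, Complex.conj_re, Complex.conj_im,
      Complex.sq_norm, Complex.normSq_apply]
    ring
  rw [Matrix.trace, Complex.re_sum, Fintype.sum_prod_type]
  calc ∑ i, ((Xᴴ * X).diag i).re = ∑ i, ∑ j, ‖X j i‖ ^ 2 :=
        Finset.sum_congr rfl (fun i _ => e i)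
    _ = ∑ j, ∑ i, ‖X j i‖ ^ 2 := Finset.sum_comm

lemma frob_cs (X Y : Matrix n n ℂ) :
    ((Xᴴ * Y).trace).re ≤ Real.sqrt ((Xᴴ * X).trace.re) * Real.sqrt ((Yᴴ * Y).trace.re) := by
  have htr : (Xᴴ * Y).trace = ∑ p : n × n, (starRingEnd ℂ) (X p.1 p.2) * Y p.1 p.2 := by
    have e : ∀ i, (Xᴴ * Y).diag i = ∑ j, (starRingEnd ℂ) (X j i) * Y j i := fun i => by
      simp [Matrix.diag_apply, Matrix.mul_apply, Matrix.conjTranspose_apply, RCLike.star_def]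
    rw [Matrix.trace, Fintype.sum_prod_type]
    calc ∑ i, (Xᴴ * Y).diag i = ∑ i, ∑ j, (starRingEnd ℂ) (X j i) * Y j i :=
          Finset.sum_congr rfl (fun i _ => e i)
      _ = ∑ j, ∑ i, (starRingEnd ℂ) (X j i) * Y j i := Finset.sum_comm
  have h1 : ((Xᴴ * Y).trace).re ≤ ∑ p : n × n, ‖X p.1 p.2‖ * ‖Y p.1 p.2‖ := by
    refine le_trans (Complex.re_le_norm _) ?_
    rw [htr]
    refine le_trans (norm_sum_le _ _) ?_
    refine Finset.sum_le_sum fun p _ => ?_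
    rw [norm_mul, Complex.norm_conj]
  have h2 := Finset.sum_mul_sq_le_sq_mul_sq Finset.univ
    (fun p : n × n => ‖X p.1 p.2‖) (fun p : n × n => ‖Y p.1 p.2‖)
  rw [trace_conjTranspose_mul_re, trace_conjTranspose_mul_re]
  have h3 : ∑ p : n × n, ‖X p.1 p.2‖ * ‖Y p.1 p.2‖ ≤
      Real.sqrt (∑ p : n × n, ‖X p.1 p.2‖ ^ 2) *
      Real.sqrt (∑ p : n × n, ‖Y p.1 p.2‖ ^ 2) := by
    have hnn : 0 ≤ ∑ p : n × n, ‖X p.1 p.2‖ * ‖Y p.1 p.2‖ :=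
      Finset.sum_nonneg fun p _ => mul_nonneg (norm_nonneg _) (norm_nonneg _)
    calc ∑ p : n × n, ‖X p.1 p.2‖ * ‖Y p.1 p.2‖
        = Real.sqrt ((∑ p : n × n, ‖X p.1 p.2‖ * ‖Y p.1 p.2‖)^2) :=
          (Real.sqrt_sq hnn).symm
      _ ≤ Real.sqrt ((∑ p : n × n, ‖X p.1 p.2‖ ^ 2) *
            (∑ p : n × n, ‖Y p.1 p.2‖ ^ 2)) := Real.sqrt_le_sqrt h2
      _ = _ := Real.sqrt_mul (Finset.sum_nonneg fun p _ => sq_nonneg _) _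
  linarith

end FvdG

namespace FvdG
variable {n : Type*} [Fintype n] [DecidableEq n]

lemma fid_piece {ρ σ F U : Matrix n n ℂ} (hρ : ρ.PosSemidef) (hσ : σ.PosSemidef)
    (hF : F.PosSemidef) (hU : ((1:Matrix n n ℂ) - U * Uᴴ).PosSemidef) :
    ((msqrt ρ * (F * (msqrt σ * U))).trace).re ≤
      Real.sqrt ((F * ρ).trace.re) * Real.sqrt ((F * σ).trace.re) := by
  set X : Matrix n n ℂ := msqrt F * msqrt ρ with hX
  set Y : Matrix n n ℂ := msqrt F * (msqrt σ * U) with hY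
  have hFh : (msqrt F)ᴴ = msqrt F := (msqrt_psd hF).1
  have hρh : (msqrt ρ)ᴴ = msqrt ρ := (msqrt_psd hρ).1
  have hσh : (msqrt σ)ᴴ = msqrt σ := (msqrt_psd hσ).1
  have hXY : Xᴴ * Y = msqrt ρ * (F * (msqrt σ * U)) := by
    rw [hX, hY, conjTranspose_mul, hFh, hρh]
    calc msqrt ρ * msqrt F * (msqrt F * (msqrt σ * U))
        = msqrt ρ * ((msqrt F * msqrt F) * (msqrt σ * U)) := by simp only [Matrix.mul_assoc]
      _ = msqrt ρ * (F * (msqrt σ * U)) := by rw [msqrt_mul_self hF]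
  have hXX : (Xᴴ * X).trace = (F * ρ).trace := by
    rw [hX, conjTranspose_mul, hFh, hρh]
    calc (msqrt ρ * msqrt F * (msqrt F * msqrt ρ)).trace
        = (msqrt ρ * (msqrt F * msqrt F) * msqrt ρ).trace := by simp only [Matrix.mul_assoc]
      _ = (msqrt ρ * F * msqrt ρ).trace := by rw [msqrt_mul_self hF]
      _ = (msqrt ρ * msqrt ρ * F).trace := trace_mul_cycle _ _ _
      _ = (ρ * F).trace := by rw [msqrt_mul_self hρ]
      _ = (F * ρ).trace := trace_mul_comm _ _
  have hZpsd : (msqrt σ * F * msqrt σ).PosSemidef := by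
    have := hF.conjTranspose_mul_mul_same (msqrt σ)
    rwa [hσh] at this
  have hZtr : (msqrt σ * F * msqrt σ).trace = (F * σ).trace := by
    calc (msqrt σ * F * msqrt σ).trace
        = (msqrt σ * msqrt σ * F).trace := trace_mul_cycle _ _ _
      _ = (σ * F).trace := by rw [msqrt_mul_self hσ]
      _ = (F * σ).trace := trace_mul_comm _ _
  have hYY : ((Yᴴ * Y).trace).re ≤ (F * σ).trace.re := by
    have hFF : ∀ Z : Matrix n n ℂ, msqrt F * (msqrt F * Z) = F * Z := fun Z => by
      rw [← Matrix.mul_assoc, msqrt_mul_self hF]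
    have e : Yᴴ * Y = Uᴴ * (msqrt σ * F * msqrt σ) * U := by
      rw [hY, conjTranspose_mul, conjTranspose_mul, hFh, hσh]
      simp only [Matrix.mul_assoc, hFF]
    rw [e, ← hZtr]
    exact trace_conj_contraction hZpsd hU
  calc ((msqrt ρ * (F * (msqrt σ * U))).trace).re
      = ((Xᴴ * Y).trace).re := by rw [hXY]
    _ ≤ Real.sqrt ((Xᴴ * X).trace.re) * Real.sqrt ((Yᴴ * Y).trace.re) := frob_cs X Y
    _ ≤ Real.sqrt ((F * ρ).trace.re) * Real.sqrt ((F * σ).trace.re) := by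
        have h1 : Real.sqrt ((Xᴴ * X).trace.re) = Real.sqrt ((F * ρ).trace.re) := by rw [hXX]
        have h2 : Real.sqrt ((Yᴴ * Y).trace.re) ≤ Real.sqrt ((F * σ).trace.re) :=
          Real.sqrt_le_sqrt hYY
        rw [h1]
        exact mul_le_mul_of_nonneg_left h2 (Real.sqrt_nonneg _)

theorem fid_meas {ρ σ E : Matrix n n ℂ} (hρ : ρ.PosSemidef) (hσ : σ.PosSemidef)
    (hE : E.PosSemidef) (h1E : ((1:Matrix n n ℂ) - E).PosSemidef) :
    traceNorm (msqrt ρ * msqrt σ) ≤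
      Real.sqrt ((E * ρ).trace.re) * Real.sqrt ((E * σ).trace.re) +
      Real.sqrt (((1 - E) * ρ).trace.re) * Real.sqrt (((1 - E) * σ).trace.re) := by
  obtain ⟨U, hUc, hUc', hUeq, _⟩ := traceNorm_dual (msqrt ρ * msqrt σ)
  have hsplit : msqrt ρ * msqrt σ * U
      = msqrt ρ * (E * (msqrt σ * U)) + msqrt ρ * ((1 - E) * (msqrt σ * U)) := by
    have h1 : E + (1 - E) = (1 : Matrix n n ℂ) := by abel
    rw [← Matrix.mul_add, ← Matrix.add_mul, h1, Matrix.one_mul, Matrix.mul_assoc]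
  rw [← hUeq]
  have := congrArg (fun Z : Matrix n n ℂ => Z.trace.re) hsplit
  simp only [trace_add, Complex.add_re] at this
  rw [this]
  exact add_le_add (fid_piece hρ hσ hE hUc') (fid_piece hρ hσ h1E hUc')

lemma classical3 {p1 p2 p3 q1 q2 q3 : ℝ} (hp1 : 0 ≤ p1) (hp2 : 0 ≤ p2) (hp3 : 0 ≤ p3)
    (hq1 : 0 ≤ q1) (hq2 : 0 ≤ q2) (hq3 : 0 ≤ q3)
    (hp : p1 + p2 + p3 = 1) (hq : q1 + q2 + q3 = 1) :
    (Real.sqrt (p1*q1) + Real.sqrt (p2*q2) + Real.sqrt (p3*q3))^2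
      ≤ 1 - ((|p1-q1| + |p2-q2| + |p3-q3|)/2)^2 := by
  set a1 := Real.sqrt p1; set a2 := Real.sqrt p2; set a3 := Real.sqrt p3
  set b1 := Real.sqrt q1; set b2 := Real.sqrt q2; set b3 := Real.sqrt q3
  have ha1 : a1^2 = p1 := Real.sq_sqrt hp1
  have ha2 : a2^2 = p2 := Real.sq_sqrt hp2
  have ha3 : a3^2 = p3 := Real.sq_sqrt hp3
  have hb1 : b1^2 = q1 := Real.sq_sqrt hq1
  have hb2 : b2^2 = q2 := Real.sq_sqrt hq2
  have hb3 : b3^2 = q3 := Real.sq_sqrt hq3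
  have ha1n : 0 ≤ a1 := Real.sqrt_nonneg _
  have ha2n : 0 ≤ a2 := Real.sqrt_nonneg _
  have ha3n : 0 ≤ a3 := Real.sqrt_nonneg _
  have hb1n : 0 ≤ b1 := Real.sqrt_nonneg _
  have hb2n : 0 ≤ b2 := Real.sqrt_nonneg _
  have hb3n : 0 ≤ b3 := Real.sqrt_nonneg _
  have hm1 : Real.sqrt (p1*q1) = a1*b1 := Real.sqrt_mul hp1 q1
  have hm2 : Real.sqrt (p2*q2) = a2*b2 := Real.sqrt_mul hp2 q2
  have hm3 : Real.sqrt (p3*q3) = a3*b3 := Real.sqrt_mul hp3 q3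
  have habs : ∀ a b : ℝ, 0 ≤ a → 0 ≤ b → |a^2 - b^2| = |a - b| * (a + b) := by
    intro a b ha hb
    rw [show a^2 - b^2 = (a - b) * (a + b) from by ring, abs_mul, abs_of_nonneg (show (0:ℝ) ≤ a + b by linarith)]
  have e1 : |p1 - q1| = |a1 - b1| * (a1 + b1) := by rw [← ha1, ← hb1]; exact habs _ _ ha1n hb1n
  have e2 : |p2 - q2| = |a2 - b2| * (a2 + b2) := by rw [← ha2, ← hb2]; exact habs _ _ ha2n hb2n
  have e3 : |p3 - q3| = |a3 - b3| * (a3 + b3) := by rw [← ha3, ← hb3]; exact habs _ _ ha3n hb3n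
  set c1 := |a1 - b1|; set c2 := |a2 - b2|; set c3 := |a3 - b3|
  have hc1 : c1^2 = (a1 - b1)^2 := sq_abs _
  have hc2 : c2^2 = (a2 - b2)^2 := sq_abs _
  have hc3 : c3^2 = (a3 - b3)^2 := sq_abs _
  have hc1n : 0 ≤ c1 := abs_nonneg _
  have hc2n : 0 ≤ c2 := abs_nonneg _
  have hc3n : 0 ≤ c3 := abs_nonneg _
  have hcs : (c1*(a1+b1) + c2*(a2+b2) + c3*(a3+b3))^2
      ≤ (c1^2 + c2^2 + c3^2) * ((a1+b1)^2 + (a2+b2)^2 + (a3+b3)^2) := by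
    have key : (c1^2 + c2^2 + c3^2) * ((a1+b1)^2 + (a2+b2)^2 + (a3+b3)^2)
        - (c1*(a1+b1) + c2*(a2+b2) + c3*(a3+b3))^2
        = (c1*(a2+b2) - c2*(a1+b1))^2 + (c1*(a3+b3) - c3*(a1+b1))^2
          + (c2*(a3+b3) - c3*(a2+b2))^2 := by ring
    linarith [sq_nonneg (c1*(a2+b2) - c2*(a1+b1)), sq_nonneg (c1*(a3+b3) - c3*(a1+b1)),
      sq_nonneg (c2*(a3+b3) - c3*(a2+b2))]
  rw [hm1, hm2, hm3, e1, e2, e3]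
  set B := a1*b1 + a2*b2 + a3*b3 with hB
  have hsa : a1^2 + a2^2 + a3^2 = 1 := by rw [ha1, ha2, ha3]; linarith
  have hsb : b1^2 + b2^2 + b3^2 = 1 := by rw [hb1, hb2, hb3]; linarith
  have hcsum : c1^2 + c2^2 + c3^2 = 2 - 2*B := by
    rw [hc1, hc2, hc3, hB]
    have expand : (a1-b1)^2 + (a2-b2)^2 + (a3-b3)^2
        = (a1^2+a2^2+a3^2) + (b1^2+b2^2+b3^2) - 2*(a1*b1 + a2*b2 + a3*b3) := by ring
    rw [expand, hsa, hsb]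
    ring
  have hdsum : (a1+b1)^2 + (a2+b2)^2 + (a3+b3)^2 = 2 + 2*B := by
    rw [hB]
    have expand : (a1+b1)^2 + (a2+b2)^2 + (a3+b3)^2
        = (a1^2+a2^2+a3^2) + (b1^2+b2^2+b3^2) + 2*(a1*b1 + a2*b2 + a3*b3) := by ring
    rw [expand, hsa, hsb]
    ring
  rw [hcsum, hdsum] at hcs
  have hexp : (2 - 2*B) * (2 + 2*B) = 4 - 4*B^2 := by ring
  rw [hexp] at hcs
  have hdiv : ((c1*(a1+b1) + c2*(a2+b2) + c3*(a3+b3))/2)^2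
      = (c1*(a1+b1) + c2*(a2+b2) + c3*(a3+b3))^2/4 := by ring
  rw [hdiv]
  clear_value a1 a2 a3 b1 b2 b3 c1 c2 c3 B
  linarith [hcs]

end FvdG

theorem stmt3 {n : Type*} [Fintype n] [DecidableEq n] (ρ σ : Matrix n n ℂ)
    (hρ : ρ.PosSemidef) (hσ : σ.PosSemidef)
    (hρ1 : ρ.trace.re ≤ 1) (hσ1 : σ.trace.re ≤ 1) :
    gTDist ρ σ ≤ pDist ρ σ ∧
    pDist ρ σ ≤ Real.sqrt (gTDist ρ σ * (2 - gTDist ρ σ)) := by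
  have hΔ : (ρ - σ).IsHermitian := hρ.1.sub hσ.1
  have htΔnn : 0 ≤ traceNorm (ρ - σ) := FvdG.traceNorm_nonneg' _
  have htr : (ρ - σ).trace.re = ρ.trace.re - σ.trace.re := by rw [trace_sub, Complex.sub_re]
  have habs : |ρ.trace.re - σ.trace.re| ≤ traceNorm (ρ - σ) := by
    have := FvdG.abs_re_trace_le_traceNorm (ρ - σ); rwa [htr] at this
  have ht0 : 0 ≤ ρ.trace.re := FvdG.psd_trace_re_nonneg hρ
  have hs0 : 0 ≤ σ.trace.re := FvdG.psd_trace_re_nonneg hσ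
  have htΔub : traceNorm (ρ - σ) ≤ ρ.trace.re + σ.trace.re := by
    have h1 : traceNorm (ρ - σ) ≤ traceNorm ρ + traceNorm (-σ) := by
      rw [sub_eq_add_neg]; exact FvdG.traceNorm_triangle ρ (-σ)
    rwa [FvdG.traceNorm_neg, FvdG.traceNorm_psd_eq hρ, FvdG.traceNorm_psd_eq hσ] at h1
  have hTval : gTDist ρ σ = traceNorm (ρ - σ)/2 + |ρ.trace.re - σ.trace.re|/2 := rfl
  have hT0 : 0 ≤ gTDist ρ σ := by rw [hTval]; positivity
  have hT1 : gTDist ρ σ ≤ 1 := by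
    rw [hTval]
    rcases abs_cases (ρ.trace.re - σ.trace.re) with ⟨he,_⟩|⟨he,_⟩ <;> rw [he] <;> linarith
  have hMnn : 0 ≤ traceNorm (msqrt ρ * msqrt σ) := FvdG.traceNorm_nonneg' _
  have hsqnn : 0 ≤ Real.sqrt ((1 - ρ.trace.re)*(1 - σ.trace.re)) := Real.sqrt_nonneg _
  have hFid : gFid ρ σ = (traceNorm (msqrt ρ * msqrt σ)
      + Real.sqrt ((1 - ρ.trace.re)*(1 - σ.trace.re)))^2 := rfl
  have hKnn : 0 ≤ traceNorm (msqrt ρ * msqrt σ)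
      + Real.sqrt ((1 - ρ.trace.re)*(1 - σ.trace.re)) := by positivity
  -- measurement probabilities from the spectral projection of ρ - σ
  obtain ⟨E, hE, h1E, hEeq⟩ := FvdG.herm_proj hΔ
  have hp1 : 0 ≤ ((E * ρ).trace).re := FvdG.trace_mul_psd_re_nonneg hE hρ
  have hq1 : 0 ≤ ((E * σ).trace).re := FvdG.trace_mul_psd_re_nonneg hE hσ
  have hp2 : 0 ≤ (((1 - E) * ρ).trace).re := FvdG.trace_mul_psd_re_nonneg h1E hρ
  have hq2 : 0 ≤ (((1 - E) * σ).trace).re := FvdG.trace_mul_psd_re_nonneg h1E hσ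
  have hp3 : 0 ≤ 1 - ρ.trace.re := by linarith
  have hq3 : 0 ≤ 1 - σ.trace.re := by linarith
  have hsum_p : ((E * ρ).trace).re + (((1 - E) * ρ).trace).re = ρ.trace.re := by
    have e : E * ρ + (1 - E) * ρ = ρ := by
      rw [← Matrix.add_mul, show E + (1 - E) = (1 : Matrix n n ℂ) from by abel, Matrix.one_mul]
    have := congrArg (fun Z : Matrix n n ℂ => Z.trace.re) e
    simpa [trace_add, Complex.add_re] using this
  have hsum_q : ((E * σ).trace).re + (((1 - E) * σ).trace).re = σ.trace.re := by
    have e : E * σ + (1 - E) * σ = σ := by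
      rw [← Matrix.add_mul, show E + (1 - E) = (1 : Matrix n n ℂ) from by abel, Matrix.one_mul]
    have := congrArg (fun Z : Matrix n n ℂ => Z.trace.re) e
    simpa [trace_add, Complex.add_re] using this
  have hps : ((E * ρ).trace).re + (((1 - E) * ρ).trace).re + (1 - ρ.trace.re) = 1 := by
    rw [hsum_p]; ring
  have hqs : ((E * σ).trace).re + (((1 - E) * σ).trace).re + (1 - σ.trace.re) = 1 := by
    rw [hsum_q]; ring
  have hd1 : ((E * ρ).trace).re - ((E * σ).trace).re
      = (traceNorm (ρ - σ) + (ρ.trace.re - σ.trace.re))/2 := by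
    have e1 : (E * ρ).trace - (E * σ).trace = ((ρ - σ) * E).trace := by
      rw [← trace_sub, ← Matrix.mul_sub]; exact trace_mul_comm _ _
    have := congrArg Complex.re e1
    simp only [Complex.sub_re] at this
    rw [this, hEeq, htr]
  have hd2 : (((1 - E) * ρ).trace).re - (((1 - E) * σ).trace).re
      = ((ρ.trace.re - σ.trace.re) - traceNorm (ρ - σ))/2 := by
    have := hsum_p
    have := hsum_q
    linarith
  -- measurement bound on fidelity
  have hfm := FvdG.fid_meas hρ hσ hE h1E
  have hm1 : Real.sqrt (((E * ρ).trace).re * ((E * σ).trace).re)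
      = Real.sqrt (((E * ρ).trace).re) * Real.sqrt (((E * σ).trace).re) :=
    Real.sqrt_mul hp1 _
  have hm2 : Real.sqrt ((((1 - E) * ρ).trace).re * (((1 - E) * σ).trace).re)
      = Real.sqrt ((((1 - E) * ρ).trace).re) * Real.sqrt ((((1 - E) * σ).trace).re) :=
    Real.sqrt_mul hp2 _
  have hcl := FvdG.classical3 hp1 hp2 hp3 hq1 hq2 hq3 hps hqs
  -- the absolute deviations sum to twice the generalised trace distance
  have ha1 : |((E * ρ).trace).re - ((E * σ).trace).re|
      = (traceNorm (ρ - σ) + (ρ.trace.re - σ.trace.re))/2 := by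
    rw [hd1]
    refine abs_of_nonneg ?_
    rcases abs_le.mp habs with ⟨hl, hr⟩
    linarith
  have ha2 : |(((1 - E) * ρ).trace).re - (((1 - E) * σ).trace).re|
      = (traceNorm (ρ - σ) - (ρ.trace.re - σ.trace.re))/2 := by
    rw [hd2]
    rw [abs_of_nonpos (by rcases abs_le.mp habs with ⟨hl, hr⟩; linarith)]
    ring
  have ha3 : |(1 - ρ.trace.re) - (1 - σ.trace.re)| = |ρ.trace.re - σ.trace.re| := by
    rw [show (1 - ρ.trace.re) - (1 - σ.trace.re) = -(ρ.trace.re - σ.trace.re) from by ring,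
      abs_neg]
  have hsum_abs : (|((E * ρ).trace).re - ((E * σ).trace).re|
      + |(((1 - E) * ρ).trace).re - (((1 - E) * σ).trace).re|
      + |(1 - ρ.trace.re) - (1 - σ.trace.re)|)/2 = gTDist ρ σ := by
    rw [ha1, ha2, ha3, hTval]; ring
  rw [hsum_abs] at hcl
  -- K ≤ B3 hence gFid ≤ 1 - T^2
  have hKB : traceNorm (msqrt ρ * msqrt σ) + Real.sqrt ((1 - ρ.trace.re)*(1 - σ.trace.re))
      ≤ Real.sqrt (((E * ρ).trace).re * ((E * σ).trace).re)
        + Real.sqrt ((((1 - E) * ρ).trace).re * (((1 - E) * σ).trace).re)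
        + Real.sqrt ((1 - ρ.trace.re) * (1 - σ.trace.re)) := by
    rw [hm1, hm2]
    linarith [hfm]
  have hgfid_le : gFid ρ σ ≤ 1 - gTDist ρ σ ^ 2 := by
    rw [hFid]
    calc (traceNorm (msqrt ρ * msqrt σ) + Real.sqrt ((1 - ρ.trace.re)*(1 - σ.trace.re)))^2
        ≤ (Real.sqrt (((E * ρ).trace).re * ((E * σ).trace).re)
          + Real.sqrt ((((1 - E) * ρ).trace).re * (((1 - E) * σ).trace).re)
          + Real.sqrt ((1 - ρ.trace.re) * (1 - σ.trace.re)))^2 := by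
          apply pow_le_pow_left₀ hKnn hKB
      _ ≤ 1 - gTDist ρ σ ^ 2 := hcl
  constructor
  · -- T ≤ pDist
    have : gTDist ρ σ = Real.sqrt (gTDist ρ σ ^ 2) := (Real.sqrt_sq hT0).symm
    rw [this]
    exact Real.sqrt_le_sqrt (by linarith)
  · -- pDist ≤ sqrt (T (2 - T))
    -- Powers–Stormer lower bound on fidelity
    have hPS := FvdG.powers_stormer (FvdG.msqrt_psd hρ) (FvdG.msqrt_psd hσ)
    rw [FvdG.msqrt_mul_self hρ, FvdG.msqrt_mul_self hσ] at hPS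
    have e : (msqrt ρ - msqrt σ) * (msqrt ρ - msqrt σ)
        = (msqrt ρ * msqrt ρ - msqrt ρ * msqrt σ) - (msqrt σ * msqrt ρ - msqrt σ * msqrt σ) := by
      rw [Matrix.sub_mul, Matrix.mul_sub, Matrix.mul_sub]
    have etr := congrArg (fun Z : Matrix n n ℂ => Z.trace.re) e
    simp only [trace_sub, Complex.sub_re] at etr
    rw [FvdG.msqrt_mul_self hρ, FvdG.msqrt_mul_self hσ,
      trace_mul_comm (msqrt σ) (msqrt ρ)] at etr
    rw [etr] at hPS
    have hretr := FvdG.re_trace_le_traceNorm (msqrt ρ * msqrt σ)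
    -- geometric mean bound
    have hgeo : 1 - (ρ.trace.re + σ.trace.re)/2 - |ρ.trace.re - σ.trace.re|/2
        ≤ Real.sqrt ((1 - ρ.trace.re)*(1 - σ.trace.re)) := by
      rcases abs_cases (ρ.trace.re - σ.trace.re) with ⟨he, hc⟩|⟨he, hc⟩ <;> rw [he]
      · have h2 : Real.sqrt ((1 - ρ.trace.re)*(1 - ρ.trace.re))
            ≤ Real.sqrt ((1 - ρ.trace.re)*(1 - σ.trace.re)) :=
          Real.sqrt_le_sqrt (mul_le_mul_of_nonneg_left (by linarith) hp3)
        rw [Real.sqrt_mul_self hp3] at h2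
        linarith
      · have h2 : Real.sqrt ((1 - σ.trace.re)*(1 - σ.trace.re))
            ≤ Real.sqrt ((1 - ρ.trace.re)*(1 - σ.trace.re)) :=
          Real.sqrt_le_sqrt (mul_le_mul_of_nonneg_right (by linarith) hq3)
        rw [Real.sqrt_mul_self hq3] at h2
        linarith
    have h1K : 1 - gTDist ρ σ ≤ traceNorm (msqrt ρ * msqrt σ)
        + Real.sqrt ((1 - ρ.trace.re)*(1 - σ.trace.re)) := by
      rw [hTval]
      linarith
    have hsq : (1 - gTDist ρ σ)^2 ≤ gFid ρ σ := by
      rw [hFid]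
      exact pow_le_pow_left₀ (by linarith) h1K 2
    have hid : gTDist ρ σ * (2 - gTDist ρ σ) = 1 - (1 - gTDist ρ σ)^2 := by ring
    have hfin : 1 - gFid ρ σ ≤ gTDist ρ σ * (2 - gTDist ρ σ) := by
      rw [hid]; linarith [hsq]
    exact Real.sqrt_le_sqrt hfin


end
end
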